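/- Let 𝒜 be a C*-algebra containing a Cuntz frame {π} ∪ {ρ_i}_{i=1}^∞ (π a nonzero projection, πρ_i = 0 and ρ_i*ρ_j = δ_{ij}·1 for all i,j). Let A ∈ 𝒜 be invertible and quasi-circular with respect to the frame: (a) ρ_i* A ρ_j = δ_{ij} A for all i,j; (b) π A ρ_i π = π A ρ_i and π ρ_i* A π = ρ_i* A π for all i; (c) there exists k_A ≥ 0 such that A commutes with π + Σ_{i=1}^{k_A} ρ_i ρ_i* and with ρ_i and ρ_i* for all i > k_A. Then for any k ≥ k_A, π A π − Σ_{i=1}^k π A ρ_i (π A⁻¹ π) ρ_i* A π is invertible in the corner algebra π𝒜π, and its inverse there equals π A⁻¹ π. -/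

import Mathlib

/-- Proposition 3.12 (abstract Schwinger–Dyson equation): let `π, ρ₁, ρ₂, …` be a
Cuntz frame in a C*-algebra `A` and let `x ∈ A` be invertible and quasi-circular with
respect to the frame (with constant `k_A`).  Then for every `k ≥ k_A`, the element
`π x π − Σ_{i<k} π x ρ_i (π x⁻¹ π) ρ_i* x π` is invertible in the corner algebra `πAπ`
with inverse `π x⁻¹ π` there. -/
theorem abstract_schwinger_dyson {A : Type*} [CStarAlgebra A]
    (π : A) (ρ : ℕ → A)
    (hπ_star : star π = π) (hπ_idem : π * π = π) (hπ_ne : π ≠ 0)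
    (hframe1 : ∀ i, π * ρ i = 0)
    (hframe2 : ∀ i j, star (ρ i) * ρ j = if i = j then (1 : A) else 0)
    (x : A) (hx : IsUnit x)
    (hqc1 : ∀ i j, star (ρ i) * x * ρ j = if i = j then x else 0)
    (hqc2 : ∀ i, π * x * ρ i * π = π * x * ρ i ∧ π * (star (ρ i) * x) * π = star (ρ i) * x * π)
    (kA : ℕ)
    (hqc3a : Commute x (π + ∑ i ∈ Finset.range kA, ρ i * star (ρ i)))
    (hqc3b : ∀ i, kA ≤ i → Commute x (ρ i) ∧ Commute x (star (ρ i)))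
    (k : ℕ) (hk : kA ≤ k) :
    (π * x * π - ∑ i ∈ Finset.range k,
        π * x * ρ i * (π * Ring.inverse x * π) * (star (ρ i) * x * π)) *
      (π * Ring.inverse x * π) = π ∧
    (π * Ring.inverse x * π) *
      (π * x * π - ∑ i ∈ Finset.range k,
        π * x * ρ i * (π * Ring.inverse x * π) * (star (ρ i) * x * π)) = π := by
  set y := Ring.inverse x with hy
  have hxy : x * y = 1 := Ring.mul_inverse_cancel x hx
  have hyx : y * x = 1 := Ring.inverse_mul_cancel x hx
  have hxy' : ∀ c : A, x * (y * c) = c := fun c => by rw [← mul_assoc, hxy, one_mul]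
  have hyx' : ∀ c : A, y * (x * c) = c := fun c => by rw [← mul_assoc, hyx, one_mul]
  have hσπ : ∀ i, star (ρ i) * π = 0 := fun i => by
    have := congrArg star (hframe1 i)
    simpa [star_mul, hπ_star] using this
  have hπ2' : ∀ c : A, π * (π * c) = π * c := fun c => by rw [← mul_assoc, hπ_idem]
  have hqc1' : ∀ i j (c : A), star (ρ i) * (x * (ρ j * c)) = (if i = j then x else 0) * c :=
    fun i j c => by rw [← mul_assoc, ← mul_assoc, hqc1 i j]
  have h2a' : ∀ i (c : A), π * (x * (ρ i * (π * c))) = π * (x * (ρ i * c)) := fun i c => by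
    have := congrArg (· * c) (hqc2 i).1
    simpa only [mul_assoc] using this
  have h2b0 : ∀ i, π * (star (ρ i) * (x * π)) = star (ρ i) * (x * π) := fun i => by
    simpa only [mul_assoc] using (hqc2 i).2
  have h2b' : ∀ i (c : A), π * (star (ρ i) * (x * (π * c))) = star (ρ i) * (x * (π * c)) :=
    fun i c => by
    have := congrArg (· * c) (hqc2 i).2
    simpa only [mul_assoc] using this
  set Q : A := π + ∑ i ∈ Finset.range k, ρ i * star (ρ i) with hQ
  have hxQ : x * Q = Q * x := by
    have hcomm : Commute x Q := by
      have hsplit : Q = (π + ∑ i ∈ Finset.range kA, ρ i * star (ρ i)) +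
          ∑ i ∈ Finset.Ico kA k, ρ i * star (ρ i) := by
        rw [hQ, add_assoc, Finset.range_eq_Ico,
          ← Finset.sum_Ico_consecutive _ (Nat.zero_le kA) hk, ← Finset.range_eq_Ico]
      rw [hsplit]
      exact hqc3a.add_right (Commute.sum_right _ _ _ fun i hi =>
        ((hqc3b i (Finset.mem_Ico.mp hi).1).1).mul_right
          ((hqc3b i (Finset.mem_Ico.mp hi).1).2))
    exact hcomm.eq
  have hQy : Q * y = y * Q := by
    calc Q * y = y * (x * (Q * y)) := (hyx' _).symm
      _ = y * (Q * (x * y)) := by rw [← mul_assoc x Q, hxQ, mul_assoc]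
      _ = y * Q := by rw [hxy, mul_one]
  have hQπ : Q * π = π := by
    rw [hQ, add_mul, Finset.sum_mul, hπ_idem]
    simp [mul_assoc, hσπ]
  have hQyπ : Q * (y * π) = y * π := by rw [← mul_assoc, hQy, mul_assoc, hQπ]
  have hQxπ : Q * (x * π) = x * π := by rw [← mul_assoc, ← hxQ, mul_assoc, hQπ]
  have hQρ : ∀ i ∈ Finset.range k, Q * ρ i = ρ i := by
    intro i hi
    rw [hQ, add_mul, Finset.sum_mul, hframe1, zero_add]
    calc ∑ j ∈ Finset.range k, ρ j * star (ρ j) * ρ i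
        = ∑ j ∈ Finset.range k, if j = i then ρ j else 0 := by
          refine Finset.sum_congr rfl fun j _ => ?_
          rw [mul_assoc, hframe2 j i]
          split_ifs <;> simp
      _ = ρ i := by rw [Finset.sum_ite_eq' (Finset.range k) i (fun j => ρ j)]; simp [hi]
  have hexp : ∀ c : A, Q * c = π * c + ∑ j ∈ Finset.range k, ρ j * (star (ρ j) * c) := by
    intro c
    rw [hQ, add_mul, Finset.sum_mul]
    simp only [mul_assoc]
  -- Key identity 1
  have key1 : ∀ i ∈ Finset.range k,
      y * (star (ρ i) * (x * (π * (y * π)))) = -(star (ρ i) * (y * π)) := by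
    intro i hi
    have hzero : star (ρ i) * (x * (Q * (y * π))) = 0 := by
      rw [hQyπ, hxy' π]; exact hσπ i
    have hexp1 : star (ρ i) * (x * (Q * (y * π))) =
        star (ρ i) * (x * (π * (y * π))) + x * (star (ρ i) * (y * π)) := by
      rw [hexp (y * π), mul_add, mul_add, Finset.mul_sum, Finset.mul_sum]
      congr 1
      calc ∑ j ∈ Finset.range k, star (ρ i) * (x * (ρ j * (star (ρ j) * (y * π))))
          = ∑ j ∈ Finset.range k,
              (if i = j then x else 0) * (star (ρ j) * (y * π)) :=
            Finset.sum_congr rfl fun j _ => hqc1' i j _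
        _ = x * (star (ρ i) * (y * π)) := by
            simp only [ite_mul, zero_mul]
            rw [Finset.sum_ite_eq (Finset.range k) i]
            simp [hi]
    have h0 : star (ρ i) * (x * (π * (y * π))) + x * (star (ρ i) * (y * π)) = 0 := by
      rw [← hexp1]; exact hzero
    have h1 : x * (star (ρ i) * (y * π)) = -(star (ρ i) * (x * (π * (y * π)))) :=
      eq_neg_of_add_eq_zero_right h0
    calc y * (star (ρ i) * (x * (π * (y * π))))
        = y * (-(x * (star (ρ i) * (y * π)))) := by rw [h1, neg_neg]
      _ = -(star (ρ i) * (y * π)) := by rw [mul_neg, hyx']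
  -- Key identity 2 (mirror)
  have key2 : ∀ i ∈ Finset.range k, ∀ c : A,
      π * (y * (π * (x * (ρ i * c)))) = -(π * (y * (ρ i * (x * c)))) := by
    intro i hi c
    have hzero : π * (y * (Q * (x * ρ i))) = 0 := by
      rw [← mul_assoc Q x, ← hxQ, mul_assoc, hQρ i hi, hyx', hframe1]
    have hexp2 : π * (y * (Q * (x * ρ i))) =
        π * (y * (π * (x * ρ i))) + π * (y * (ρ i * x)) := by
      rw [hexp (x * ρ i), mul_add, mul_add]
      congr 1
      rw [Finset.mul_sum, Finset.mul_sum]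
      calc ∑ j ∈ Finset.range k, π * (y * (ρ j * (star (ρ j) * (x * ρ i))))
          = ∑ j ∈ Finset.range k, if j = i then π * (y * (ρ j * x)) else 0 := by
            refine Finset.sum_congr rfl fun j _ => ?_
            rw [← mul_assoc (star (ρ j)) x, hqc1 j i]
            split_ifs <;> simp
        _ = π * (y * (ρ i * x)) := by
            rw [Finset.sum_ite_eq' (Finset.range k) i (fun j => π * (y * (ρ j * x)))]
            simp [hi]
    have h0 : π * (y * (π * (x * ρ i))) + π * (y * (ρ i * x)) = 0 := by
      rw [← hexp2]; exact hzero
    have h1 : π * (y * (π * (x * ρ i))) = -(π * (y * (ρ i * x))) :=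
      eq_neg_of_add_eq_zero_left h0
    have h2 := congrArg (· * c) h1
    simpa only [mul_assoc, neg_mul] using h2
  constructor
  · -- right inverse
    rw [sub_mul, Finset.sum_mul]
    have hA : ∀ i ∈ Finset.range k,
        (π * x * ρ i * (π * y * π) * (star (ρ i) * x * π)) * (π * y * π) =
          -(π * (x * (ρ i * (star (ρ i) * (y * π))))) := by
      intro i hi
      simp only [mul_assoc, hπ2', h2a', h2b']
      rw [key1 i hi]
      simp only [mul_neg]
    rw [Finset.sum_congr rfl hA, Finset.sum_neg_distrib, sub_neg_eq_add]
    have hfirst : π * x * π * (π * y * π) = π * (x * (π * (y * π))) := by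
      simp only [mul_assoc, hπ2']
    rw [hfirst]
    calc π * (x * (π * (y * π))) +
          ∑ i ∈ Finset.range k, π * (x * (ρ i * (star (ρ i) * (y * π))))
        = π * (x * (Q * (y * π))) := by
          rw [hexp (y * π), mul_add, mul_add, Finset.mul_sum, Finset.mul_sum]
      _ = π := by rw [hQyπ, hxy' π, hπ_idem]
  · -- left inverse
    rw [mul_sub, Finset.mul_sum]
    have hB : ∀ i ∈ Finset.range k,
        (π * y * π) * (π * x * ρ i * (π * y * π) * (star (ρ i) * x * π)) =
          -(π * (y * (ρ i * (star (ρ i) * (x * π))))) := by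
      intro i hi
      simp only [mul_assoc, hπ2', h2a', h2b', h2b0]
      rw [key2 i hi (y * (star (ρ i) * (x * π)))]
      simp only [hxy']
    rw [Finset.sum_congr rfl hB, Finset.sum_neg_distrib, sub_neg_eq_add]
    have hfirst : (π * y * π) * (π * x * π) = π * (y * (π * (x * π))) := by
      simp only [mul_assoc, hπ2']
    rw [hfirst]
    calc π * (y * (π * (x * π))) +
          ∑ i ∈ Finset.range k, π * (y * (ρ i * (star (ρ i) * (x * π))))
        = π * (y * (Q * (x * π))) := by
          rw [hexp (x * π), mul_add, mul_add, Finset.mul_sum, Finset.mul_sum]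
      _ = π := by rw [hQxπ, hyx' π, hπ_idem]
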